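/- Let W be a set of n₀ vertices, Σ a finite alphabet, π a Unique Games instance on the complete graph over W with alphabet Σ, and d ≥ 1 an integer. Then every feasible edge set F of the derived Constrained Connectivity instance satisfies |F| ≥ d·OPT_UG + n₀(n₀−1)/2 + d·n₀ + |Σ|·n₀, where OPT_UG is the minimum of Σ_{x∈W} |L(x)| over all labelings L : W → (subsets of Σ) such that every pair {x,y} ⊆ W has some α ∈ L(x) with π_{xy}(α) ∈ L(y). -/
import Mathlib


/-- The vertices of the Constrained Connectivity instance derived from a Unique
Games instance on vertex set `W` with alphabet `A` and duplication parameter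
`d`: outer nodes `(x,i) ∈ W × [d]`, label nodes `(x,α) ∈ W × A`, and a dummy
node `z`. -/
inductive UGV (W A : Type) (d : ℕ) : Type
  | outer : W → Fin d → UGV W A d
  | lab : W → A → UGV W A d
  | z : UGV W A d
deriving DecidableEq

/-- The edge set of the derived instance: `{(x,i),(x,α)}` for all `x, i, α`;
`{(x,α),(y,β)}` whenever `x ≠ y` and `π x y α = β`; and `{v,z}` for all `v`. -/
def ugEdges {W A : Type} {d : ℕ} (π : W → W → A ≃ A) : Set (Sym2 (UGV W A d)) :=
  {e | (∃ (x : W) (i : Fin d) (α : A), e = s(UGV.outer x i, UGV.lab x α)) ∨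
       (∃ (x y : W) (α : A), x ≠ y ∧ e = s(UGV.lab x α, UGV.lab y (π x y α))) ∨
       (∃ v : UGV W A d, e = s(v, UGV.z))}

/-- The safe sets of the derived instance: for distinct `x, y ∈ W` and `i ∈ [d]`,
`S((x,i),(y,i)) = {(x,i),(y,i)} ∪ ({x} × A) ∪ ({y} × A)`; every other pair's safe
set is its two endpoints together with `z`. -/
def ugSafe {W A : Type} [DecidableEq W] {d : ℕ} :
    UGV W A d → UGV W A d → Set (UGV W A d)
  | UGV.outer x i, UGV.outer y j =>
      if x ≠ y ∧ i = j then
        {UGV.outer x i, UGV.outer y j} ∪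
          {w | ∃ α : A, w = UGV.lab x α ∨ w = UGV.lab y α}
      else {UGV.outer x i, UGV.outer y j, UGV.z}
  | p, q => {p, q, UGV.z}

/-- The multi-labeling `Lab` is a valid solution of the Unique Games instance
`π`: every pair of distinct vertices is satisfied. -/
def ugValid {W A : Type} (π : W → W → A ≃ A) (Lab : W → Finset A) : Prop :=
  ∀ x y : W, x ≠ y → ∃ α ∈ Lab x, π x y α ∈ Lab y

def ugP {W A : Type} {d : ℕ} (π : W → W → A ≃ A) (F : Finset (Sym2 (UGV W A d)))
    (x y : W) (i : Fin d) : Prop :=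
  ∃ α : A, s(UGV.outer x i, UGV.lab x α) ∈ F ∧
    s(UGV.outer y i, UGV.lab y (π x y α)) ∈ F ∧
    s(UGV.lab x α, UGV.lab y (π x y α)) ∈ F

def ugHp {W A : Type} {d : ℕ} (π : W → W → A ≃ A) (F : Finset (Sym2 (UGV W A d)))
    (x y : W) (i : Fin d) (v : UGV W A d) : Prop :=
  (v = UGV.outer y i → ugP π F x y i) ∧
  (∀ α : A, v = UGV.lab x α → s(UGV.outer x i, UGV.lab x α) ∈ F) ∧
  (∀ β : A, v = UGV.lab y β → s(UGV.outer x i, UGV.lab x ((π x y).symm β)) ∈ F ∧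
    s(UGV.lab x ((π x y).symm β), UGV.lab y β) ∈ F)

def ugInS {W A : Type} {d : ℕ} (x y : W) (i : Fin d) (v : UGV W A d) : Prop :=
  v = UGV.outer x i ∨ v = UGV.outer y i ∨ ∃ α : A, v = UGV.lab x α ∨ v = UGV.lab y α

lemma ug_edge_from_outer {W A : Type} {d : ℕ} {π : W → W → A ≃ A}
    {x : W} {i : Fin d} {q : UGV W A d}
    (h : s(UGV.outer x i, q) ∈ ugEdges π) :
    (∃ α : A, q = UGV.lab x α) ∨ q = UGV.z := by
  rcases h with ⟨x', i', α', he⟩ | ⟨x', y', α', hne, he⟩ | ⟨v, he⟩ <;>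
    rw [Sym2.eq_iff] at he
  · rcases he with ⟨h1, h2⟩ | ⟨h1, h2⟩
    · injection h1 with e1 e2
      exact Or.inl ⟨α', by rw [h2, e1]⟩
    · exact absurd h1 (by simp)
  · rcases he with ⟨h1, _⟩ | ⟨h1, _⟩ <;> exact absurd h1 (by simp)
  · rcases he with ⟨h1, h2⟩ | ⟨h1, h2⟩
    · exact Or.inr h2
    · exact absurd h1 (by simp)

lemma ug_edge_from_lab {W A : Type} {d : ℕ} {π : W → W → A ≃ A}
    (hπ : ∀ x y : W, π y x = (π x y).symm)
    {x : W} {α : A} {q : UGV W A d}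
    (h : s(UGV.lab x α, q) ∈ ugEdges π) :
    (∃ i' : Fin d, q = UGV.outer x i') ∨
    (∃ y' : W, x ≠ y' ∧ q = UGV.lab y' (π x y' α)) ∨ q = UGV.z := by
  rcases h with ⟨x', i', α', he⟩ | ⟨x', y', α', hne, he⟩ | ⟨v, he⟩ <;>
    rw [Sym2.eq_iff] at he
  · rcases he with ⟨h1, h2⟩ | ⟨h1, h2⟩
    · exact absurd h1 (by simp)
    · injection h1 with e1 e2
      exact Or.inl ⟨i', by rw [h2, e1]⟩
  · rcases he with ⟨h1, h2⟩ | ⟨h1, h2⟩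
    · injection h1 with e1 e2
      refine Or.inr (Or.inl ⟨y', ?_, ?_⟩)
      · rw [← e1] at hne; exact hne
      · rw [h2, e1, e2]
    · injection h1 with e1 e2
      refine Or.inr (Or.inl ⟨x', ?_, ?_⟩)
      · rw [e1]; exact fun hc => hne hc.symm
      · rw [h2]
        congr 1
        rw [← e1] at e2
        rw [e2, hπ x' x, Equiv.symm_apply_apply]
  · rcases he with ⟨h1, h2⟩ | ⟨h1, h2⟩
    · exact Or.inr (Or.inr h2)
    · exact absurd h1 (by simp)

lemma ug_main {W A : Type} [DecidableEq W] [DecidableEq A] {d : ℕ}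
    (π : W → W → A ≃ A) (hπ : ∀ x y : W, π y x = (π x y).symm)
    (F : Finset (Sym2 (UGV W A d)))
    (hFE : (↑F : Set (Sym2 (UGV W A d))) ⊆ ugEdges π)
    {x y : W} (hxy : x ≠ y) (i : Fin d) :
    ∀ (p r : UGV W A d)
      (w : (SimpleGraph.fromEdgeSet (↑F : Set (Sym2 (UGV W A d)))).Walk p r),
      r = UGV.outer y i → (∀ v ∈ w.support, ugInS x y i v) →
      (ugP π F x y i ∨ ugHp π F x y i p) → ugP π F x y i := by
  intro p r w
  induction w with
  | nil =>
    rintro rfl _ h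
    rcases h with h | h
    · exact h
    · exact h.1 rfl
  | @cons p q r hadj w' ih =>
    rintro rfl hsup hH
    rcases hH with hH | hHpp
    · exact hH
    have hqsup : ∀ v ∈ w'.support, ugInS x y i v := fun v hv =>
      hsup v (by rw [SimpleGraph.Walk.support_cons]; exact List.mem_cons_of_mem _ hv)
    have hInp : ugInS x y i p := hsup p (SimpleGraph.Walk.start_mem_support _)
    have hInq : ugInS x y i q := hqsup q (SimpleGraph.Walk.start_mem_support _)
    rw [SimpleGraph.fromEdgeSet_adj] at hadj
    have hpqF : s(p, q) ∈ F := hadj.1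
    have hedge : s(p, q) ∈ ugEdges π := hFE hpqF
    apply ih rfl hqsup
    rcases hInp with rfl | rfl | ⟨α, rfl | rfl⟩
    · -- p = outer x i
      rcases ug_edge_from_outer hedge with ⟨α, rfl⟩ | rfl
      · refine Or.inr ⟨by simp, ?_, ?_⟩
        · intro γ hγ
          injection hγ with e1 e2
          rw [← e2]; exact hpqF
        · intro β hβ
          injection hβ with e1 e2
          exact absurd e1 hxy
      · rcases hInq with h | h | ⟨γ, h | h⟩ <;> simp at h
    · -- p = outer y i
      exact Or.inl (hHpp.1 rfl)
    · -- p = lab x α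
      have hs : s(UGV.outer x i, UGV.lab x α) ∈ F := hHpp.2.1 α rfl
      rcases ug_edge_from_lab hπ hedge with ⟨i', rfl⟩ | ⟨y'', hne, rfl⟩ | rfl
      · -- q = outer x i'
        refine Or.inr ⟨?_, ?_, ?_⟩
        · intro hc; injection hc with e1 e2; exact absurd e1 hxy
        · intro γ hγ; exact absurd hγ (by simp)
        · intro β hβ; exact absurd hβ (by simp)
      · -- q = lab y'' (π x y'' α), x ≠ y''
        refine Or.inr ⟨by simp, ?_, ?_⟩
        · intro γ' hγ'
          injection hγ' with f1 f2
          exact absurd f1.symm hne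
        · intro β hβ
          injection hβ with f1 f2
          have hβ2 : β = π x y α := by rw [← f2, f1]
          rw [f1] at hpqF
          rw [hβ2, Equiv.symm_apply_apply]
          exact ⟨hs, hpqF⟩
      · rcases hInq with h | h | ⟨γ, h | h⟩ <;> simp at h
    · -- p = lab y α
      have hs2 := hHpp.2.2 α rfl
      rcases ug_edge_from_lab hπ hedge with ⟨i', rfl⟩ | ⟨y'', hne, rfl⟩ | rfl
      · -- q = outer y i'
        refine Or.inr ⟨?_, ?_, ?_⟩
        · intro hc
          injection hc with e1 e2
          rw [e2] at hpqF
          refine ⟨(π x y).symm α, hs2.1, ?_, ?_⟩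
          · rw [Equiv.apply_symm_apply]
            rw [Sym2.eq_swap] at hpqF
            exact hpqF
          · rw [Equiv.apply_symm_apply]
            exact hs2.2
        · intro γ hγ; exact absurd hγ (by simp)
        · intro β hβ; exact absurd hβ (by simp)
      · -- q = lab y'' (π y y'' α), y ≠ y''
        refine Or.inr ⟨by simp, ?_, ?_⟩
        · intro γ' hγ'
          injection hγ' with f1 f2
          rw [f1] at f2
          rw [hπ x y] at f2
          rw [← f2]
          exact hs2.1
        · intro β hβ
          injection hβ with f1 f2
          exact absurd f1.symm hne
      · rcases hInq with h | h | ⟨γ, h | h⟩ <;> simp at h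

lemma ug_key {W A : Type} [DecidableEq W] [DecidableEq A] {d : ℕ}
    (π : W → W → A ≃ A) (hπ : ∀ x y : W, π y x = (π x y).symm)
    (F : Finset (Sym2 (UGV W A d)))
    (hFE : (↑F : Set (Sym2 (UGV W A d))) ⊆ ugEdges π)
    (hF : ∀ p q : UGV W A d,
      ∃ w : (SimpleGraph.fromEdgeSet (↑F : Set (Sym2 (UGV W A d)))).Walk p q,
        ∀ v ∈ w.support, v ∈ ugSafe p q)
    {x y : W} (hxy : x ≠ y) (i : Fin d) :
    ∃ α : A, s(UGV.outer x i, UGV.lab x α) ∈ F ∧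
      s(UGV.outer y i, UGV.lab y (π x y α)) ∈ F ∧
      s(UGV.lab x α, UGV.lab y (π x y α)) ∈ F := by
  obtain ⟨w, hw⟩ := hF (UGV.outer x i) (UGV.outer y i)
  have hS : ugSafe (UGV.outer x i) (UGV.outer y i) =
      ({UGV.outer x i, UGV.outer y i} ∪
        {u | ∃ α : A, u = UGV.lab x α ∨ u = UGV.lab y α} : Set (UGV W A d)) := by
    show (if x ≠ y ∧ i = i then _ else _) = _
    rw [if_pos ⟨hxy, rfl⟩]
  have hw' : ∀ v ∈ w.support, ugInS x y i v := by
    intro v hv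
    have hm := hw v hv
    rw [hS] at hm
    rcases hm with (h | h) | h
    · exact Or.inl h
    · exact Or.inr (Or.inl h)
    · exact Or.inr (Or.inr h)
  exact ug_main π hπ F hFE hxy i _ _ w rfl hw'
    (Or.inr ⟨fun h => absurd h (by simp [hxy]),
      fun γ h => absurd h (by simp), fun β h => absurd h (by simp)⟩)

lemma ug_zedge {W A : Type} [DecidableEq W] [DecidableEq A] {d : ℕ}
    (F : Finset (Sym2 (UGV W A d)))
    (hF : ∀ p q : UGV W A d,
      ∃ w : (SimpleGraph.fromEdgeSet (↑F : Set (Sym2 (UGV W A d)))).Walk p q,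
        ∀ v ∈ w.support, v ∈ ugSafe p q)
    (v : UGV W A d) (hv : v ≠ UGV.z) : s(v, UGV.z) ∈ F := by
  obtain ⟨w, hw⟩ := hF v UGV.z
  have hS : ugSafe v UGV.z = ({v, UGV.z, UGV.z} : Set (UGV W A d)) := by
    cases v <;> rfl
  cases w with
  | nil => exact absurd rfl hv
  | @cons _ q _ hadj w' =>
    have hq := hw q (by
      rw [SimpleGraph.Walk.support_cons]
      exact List.mem_cons_of_mem _ (SimpleGraph.Walk.start_mem_support _))
    rw [hS] at hq
    rw [SimpleGraph.fromEdgeSet_adj] at hadj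
    rcases hq with h | h | h
    · exact absurd h.symm hadj.2
    · rw [← h]; exact hadj.1
    · rw [← h]; exact hadj.1


/-- Every feasible edge set of the Constrained Connectivity instance derived
from a Unique Games instance on `n₀` vertices has at least
`d·OPT_UG + n₀(n₀-1)/2 + d·n₀ + |A|·n₀` edges, where `OPT_UG` is the minimum
total number of labels in a valid multi-labeling. -/
theorem stmt11 {W A : Type} [Fintype W] [Fintype A] [DecidableEq W] [DecidableEq A]
    (π : W → W → A ≃ A) (hπ : ∀ x y : W, π y x = (π x y).symm)
    (d : ℕ) (hd : 1 ≤ d)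
    (OPT : ℕ)
    (hOPT_ex : ∃ Lab : W → Finset A, ugValid π Lab ∧ ∑ x : W, (Lab x).card = OPT)
    (hOPT_min : ∀ Lab : W → Finset A, ugValid π Lab → OPT ≤ ∑ x : W, (Lab x).card)
    (F : Finset (Sym2 (UGV W A d)))
    (hFE : (↑F : Set (Sym2 (UGV W A d))) ⊆ ugEdges π)
    (hF : ∀ p q : UGV W A d,
      ∃ w : (SimpleGraph.fromEdgeSet (↑F : Set (Sym2 (UGV W A d)))).Walk p q,
        ∀ v ∈ w.support, v ∈ ugSafe p q) :
    d * OPT + Fintype.card W * (Fintype.card W - 1) / 2 + d * Fintype.card W +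
      Fintype.card A * Fintype.card W ≤ F.card := by
  classical
  rcases isEmpty_or_nonempty W with hW | hW
  · obtain ⟨Lab0, _, hLab0⟩ := hOPT_ex
    have hO : OPT = 0 := by rw [← hLab0]; simp
    have hcW : Fintype.card W = 0 := Fintype.card_eq_zero
    simp [hO, hcW]
  · -- spoke edges
    set n := Fintype.card W with hn
    let FS := F.filter fun e => ∃ (x : W) (i : Fin d) (α : A),
      e = s(UGV.outer x i, UGV.lab x α)
    let FC := F.filter fun e => ∃ (x y : W) (α : A),
      x ≠ y ∧ e = s(UGV.lab x α, UGV.lab y (π x y α))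
    let FZ := F.filter fun e => UGV.z ∈ e
    let Lab : Fin d → W → Finset A := fun i x =>
      Finset.univ.filter fun α => s(UGV.outer x i, UGV.lab x α) ∈ F
    have hLabValid : ∀ i, ugValid π (Lab i) := by
      intro i x y hxy
      obtain ⟨α, h1, h2, _⟩ := ug_key π hπ F hFE hF hxy i
      exact ⟨α, by simp [Lab, h1], by simp [Lab, h2]⟩
    have hOPTle : ∀ i : Fin d, OPT ≤ ∑ x : W, ((Lab i) x).card :=
      fun i => hOPT_min _ (hLabValid i)
    let f3 : Fin d × W × A → Sym2 (UGV W A d) := fun t =>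
      s(UGV.outer t.2.1 t.1, UGV.lab t.2.1 t.2.2)
    have hf3inj : Function.Injective f3 := by
      intro u v h
      simp only [f3, Sym2.eq_iff] at h
      rcases h with ⟨h1, h2⟩ | ⟨h1, h2⟩
      · injection h1 with e1 e2
        injection h2 with e3 e4
        obtain ⟨ui, ux, uα⟩ := u
        obtain ⟨vi, vx, vα⟩ := v
        simp_all
      · exact absurd h1 (by simp)
    let T := Finset.univ.filter fun t : Fin d × W × A => f3 t ∈ F
    have hTcard : T.card = ∑ i : Fin d, ∑ x : W, ((Lab i) x).card := by
      rw [Finset.card_filter]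
      rw [Fintype.sum_prod_type]
      refine Finset.sum_congr rfl fun i _ => ?_
      rw [Fintype.sum_prod_type]
      refine Finset.sum_congr rfl fun x _ => ?_
      rw [Finset.card_filter]
    have hTFS : T.image f3 ⊆ FS := by
      intro e he
      rw [Finset.mem_image] at he
      obtain ⟨t, ht, rfl⟩ := he
      exact Finset.mem_filter.mpr ⟨(Finset.mem_filter.mp ht).2, t.2.1, t.1, t.2.2, rfl⟩
    have hFScard : d * OPT ≤ FS.card := by
      calc d * OPT = ∑ _i : Fin d, OPT := by
            rw [Finset.sum_const, Finset.card_univ, Fintype.card_fin, smul_eq_mul]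
        _ ≤ ∑ i : Fin d, ∑ x : W, ((Lab i) x).card :=
            Finset.sum_le_sum (fun i _ => hOPTle i)
        _ = T.card := hTcard.symm
        _ = (T.image f3).card := (Finset.card_image_of_injective T hf3inj).symm
        _ ≤ FS.card := Finset.card_le_card hTFS
    -- cross edges
    let gW : UGV W A d → W := fun v => match v with
      | UGV.outer x _ => x
      | UGV.lab x _ => x
      | UGV.z => Classical.arbitrary W
    let pairs := Finset.univ.filter fun e : Sym2 W => ¬ e.IsDiag
    have hpairs : pairs ⊆ FC.image (Sym2.map gW) := by
      intro e he
      rw [Finset.mem_filter] at he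
      obtain ⟨-, hnd⟩ := he
      revert hnd
      induction e using Sym2.ind with
      | _ x y =>
        intro hnd
        have hxy : x ≠ y := by
          intro h
          exact hnd (by rw [h]; exact Sym2.mk_isDiag_iff.mpr rfl)
        obtain ⟨α, -, -, h3⟩ := ug_key π hπ F hFE hF hxy ⟨0, hd⟩
        rw [Finset.mem_image]
        refine ⟨s(UGV.lab x α, UGV.lab y (π x y α)), ?_, ?_⟩
        · exact Finset.mem_filter.mpr ⟨h3, x, y, α, hxy, rfl⟩
        · rfl
    have hpairscard : pairs.card = n * (n - 1) / 2 := by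
      have h1 : Fintype.card {e : Sym2 W // ¬ e.IsDiag} = pairs.card :=
        Fintype.card_subtype _
      rw [← h1, Sym2.card_subtype_not_diag, Nat.choose_two_right]
    have hFCcard : n * (n - 1) / 2 ≤ FC.card := by
      rw [← hpairscard]
      exact le_trans (Finset.card_le_card hpairs) Finset.card_image_le
    -- z edges
    let g0 : (W × Fin d) ⊕ (W × A) → UGV W A d := fun s => match s with
      | Sum.inl (x, i) => UGV.outer x i
      | Sum.inr (x, a) => UGV.lab x a
    let fz : (W × Fin d) ⊕ (W × A) → Sym2 (UGV W A d) := fun s => s(g0 s, UGV.z)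
    have hg0 : ∀ s, g0 s ≠ UGV.z := by rintro (⟨x, i⟩ | ⟨x, a⟩) <;> simp [g0]
    have hg0inj : Function.Injective g0 := by
      rintro (⟨x, i⟩ | ⟨x, a⟩) (⟨x', i'⟩ | ⟨x', a'⟩) h
      · simp only [g0, UGV.outer.injEq] at h
        rw [h.1, h.2]
      · exact absurd h (by simp [g0])
      · exact absurd h (by simp [g0])
      · simp only [g0, UGV.lab.injEq] at h
        rw [h.1, h.2]
    have hfzinj : Function.Injective fz := by
      intro u v h
      simp only [fz, Sym2.eq_iff] at h
      rcases h with ⟨h1, -⟩ | ⟨h1, h2⟩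
      · exact hg0inj h1
      · exact absurd h1 (hg0 u)
    have hfzFZ : Finset.univ.image fz ⊆ FZ := by
      intro e he
      rw [Finset.mem_image] at he
      obtain ⟨s, -, rfl⟩ := he
      refine Finset.mem_filter.mpr ⟨ug_zedge F hF _ (hg0 s), ?_⟩
      show UGV.z ∈ s(g0 s, UGV.z)
      rw [Sym2.mem_iff]
      exact Or.inr rfl
    have hFZcard : d * n + Fintype.card A * n ≤ FZ.card := by
      have h := Finset.card_le_card hfzFZ
      rw [Finset.card_image_of_injective _ hfzinj, Finset.card_univ,
        Fintype.card_sum, Fintype.card_prod, Fintype.card_prod, Fintype.card_fin] at h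
      rw [mul_comm d n, mul_comm (Fintype.card A) n]
      exact h
    -- disjointness
    have hdSC : Disjoint FS FC := by
      rw [Finset.disjoint_left]
      intro e heS heC
      obtain ⟨-, x1, i1, α1, rfl⟩ := Finset.mem_filter.mp heS
      obtain ⟨-, x2, y2, α2, -, he2⟩ := Finset.mem_filter.mp heC
      rw [Sym2.eq_iff] at he2
      rcases he2 with ⟨h1, -⟩ | ⟨h1, -⟩ <;> simp at h1
    have hdZ : Disjoint (FS ∪ FC) FZ := by
      rw [Finset.disjoint_left]
      intro e heSC heZ
      have hz := (Finset.mem_filter.mp heZ).2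
      rcases Finset.mem_union.mp heSC with h | h
      · obtain ⟨-, x1, i1, α1, rfl⟩ := Finset.mem_filter.mp h
        rw [Sym2.mem_iff] at hz
        rcases hz with h' | h' <;> simp at h'
      · obtain ⟨-, x2, y2, α2, -, rfl⟩ := Finset.mem_filter.mp h
        rw [Sym2.mem_iff] at hz
        rcases hz with h' | h' <;> simp at h'
    have hsub : FS ∪ FC ∪ FZ ⊆ F := by
      intro e he
      rcases Finset.mem_union.mp he with h | h
      · rcases Finset.mem_union.mp h with h' | h'
        · exact (Finset.mem_filter.mp h').1
        · exact (Finset.mem_filter.mp h').1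
      · exact (Finset.mem_filter.mp h).1
    have hcard : FS.card + FC.card + FZ.card ≤ F.card := by
      rw [← Finset.card_union_of_disjoint hdSC, ← Finset.card_union_of_disjoint hdZ]
      exact Finset.card_le_card hsub
    linarith [hFScard, hFCcard, hFZcard, hcard]
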